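/- arXiv:1401.5829 — 3 statements merged into one kernel-verified Lean document; each statement's English description precedes it below -/
import Mathlib

section
/- Suppose that for each p in (1,∞), E_p is a separable Banach space such that (a) E_p fails the bounded compact approximation property for each p in (1,∞), and (b) whenever q < r, every bounded linear operator from E_r to E_q is compact. Then there is no separable Banach space X such that for every p in (1,∞), E_p is isomorphic to a complemented subspace of X. -/
open Filter Topology

/-- The strong operator topology on the bounded operators on a normed space `X`: the topology
induced from pointwise convergence. -/
noncomputable def sotB (𝕜 X : Type*) [NontriviallyNormedField 𝕜] [NormedAddCommGroup X]
    [NormedSpace 𝕜 X] : TopologicalSpace (X →L[𝕜] X) :=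
  TopologicalSpace.induced (fun T => (T : X → X)) Pi.topologicalSpace

/-- A normed space `X` has the bounded compact approximation property if there is a uniformly
bounded net of compact operators on `X` converging to the identity in the strong operator
topology; equivalently, if the identity belongs to the SOT closure of some norm-bounded set of
compact operators. -/
def HasBCAP (𝕜 X : Type*) [NontriviallyNormedField 𝕜] [NormedAddCommGroup X]
    [NormedSpace 𝕜 X] : Prop :=
  ∃ M : ℝ, (1 : X →L[𝕜] X) ∈
    @closure _ (sotB 𝕜 X) {K : X →L[𝕜] X | IsCompactOperator K ∧ ‖K‖ ≤ M}

/-- **Lemma 2.4.** If each `E p`, `p ∈ (1,∞)`, is a separable Banach space failing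
the BCAP, and every operator `E r → E q` is compact whenever `1 < q < r`, then no separable
Banach space contains complemented isomorphic copies of all the `E p`. -/
theorem stmt4 {𝕜 : Type*} [NontriviallyNormedField 𝕜] (E : ℝ → Type*)
    [∀ p, NormedAddCommGroup (E p)] [∀ p, NormedSpace 𝕜 (E p)] [∀ p, CompleteSpace (E p)]
    [∀ p, TopologicalSpace.SeparableSpace (E p)]
    (hBCAP : ∀ p ∈ Set.Ioi (1 : ℝ), ¬ HasBCAP 𝕜 (E p))
    (hcpt : ∀ q r : ℝ, 1 < q → q < r → ∀ A : E r →L[𝕜] E q, IsCompactOperator A) :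
    ¬ ∃ (X : Type*) (_ : NormedAddCommGroup X) (_ : NormedSpace 𝕜 X) (_ : CompleteSpace X)
        (_ : TopologicalSpace.SeparableSpace X),
      ∀ p ∈ Set.Ioi (1 : ℝ), ∃ (Z : Submodule 𝕜 X) (Q : X →L[𝕜] X),
        IsClosed (Z : Set X) ∧ Q.comp Q = Q ∧ LinearMap.range (Q : X →ₗ[𝕜] X) = Z ∧
        Nonempty (E p ≃L[𝕜] Z) := by
  rintro ⟨X, _, _, _, _, h⟩
  classical
  choose Z Q hZc hQQ hQr he using h
  -- total versions of the projections
  set Qf : ℝ → (X →L[𝕜] X) :=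
    fun q => if hq : q ∈ Set.Ioi (1 : ℝ) then Q q hq else 0 with hQfdef
  have hQfe : ∀ q (hq : q ∈ Set.Ioi (1 : ℝ)), Qf q = Q q hq := fun q hq => dif_pos hq
  have hQfmem : ∀ q (hq : q ∈ Set.Ioi (1 : ℝ)) (x : X), Qf q x ∈ Z q hq := by
    intro q hq x
    rw [hQfe q hq, ← hQr q hq]
    exact LinearMap.mem_range.mpr ⟨x, rfl⟩
  have hfix : ∀ q (hq : q ∈ Set.Ioi (1 : ℝ)), ∀ z ∈ Z q hq, Qf q z = z := by
    intro q hq z hz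
    rw [hQfe q hq]
    rw [← hQr q hq] at hz
    obtain ⟨y, rfl⟩ := hz
    have := ContinuousLinearMap.ext_iff.mp (hQQ q hq) y
    simpa using this
  haveI : Nonempty X := ⟨0⟩
  haveI : SecondCountableTopology X := UniformSpace.secondCountable_of_separable X
  set xs : ℕ → X := TopologicalSpace.denseSeq X with hxsdef
  have hxs : DenseRange xs := TopologicalSpace.denseRange_denseSeq X
  -- pigeonhole: a uniform bound on uncountably many projections
  have hex : ∃ N : ℕ, ¬ ({q ∈ Set.Ioi (1 : ℝ) | ‖Qf q‖ ≤ (N : ℝ)}).Countable := by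
    by_contra hc
    push_neg at hc
    have hcover : Set.Ioi (1 : ℝ) ⊆ ⋃ n : ℕ, {q ∈ Set.Ioi (1 : ℝ) | ‖Qf q‖ ≤ (n : ℝ)} := by
      intro q hq
      obtain ⟨n, hn⟩ := exists_nat_ge ‖Qf q‖
      exact Set.mem_iUnion.2 ⟨n, hq, hn⟩
    have hcnt : (Set.Ioi (1 : ℝ)).Countable :=
      ((Set.countable_iUnion hc).mono hcover)
    have h1 : (Cardinal.continuum : Cardinal) ≤ Cardinal.aleph0 := by
      rw [← Cardinal.mk_Ioi_real (1 : ℝ)]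
      exact hcnt.le_aleph0
    exact absurd h1 (not_le.mpr Cardinal.aleph0_lt_continuum)
  obtain ⟨N, hN⟩ := hex
  set S : Set ℝ := {q ∈ Set.Ioi (1 : ℝ) | ‖Qf q‖ ≤ (N : ℝ)} with hSdef
  -- the SOT evaluation map into a second-countable space
  set F : ℝ → ℕ → X := fun q i => Qf q (xs i) with hFdef
  obtain ⟨s, hsc, hsd⟩ := TopologicalSpace.exists_countable_dense ↥(F '' S)
  choose g hg1 hg2 using fun a : ↥(F '' S) => (Set.mem_image _ _ _).mp a.2
  have hpex : ∃ p, p ∈ S ∧ p ∉ g '' s := by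
    by_contra hc
    push_neg at hc
    exact hN ((hsc.image g).mono hc)
  obtain ⟨p, hpS, hpD⟩ := hpex
  have hp1 : p ∈ Set.Ioi (1 : ℝ) := hpS.1
  -- find a sequence pₙ ≠ p with Q_{pₙ} → Q_p in SOT on the dense sequence
  have hFp : F p ∈ closure (F '' (S \ {p})) := by
    have hmem : F p ∈ F '' S := ⟨p, hpS, rfl⟩
    have h1 : (⟨F p, hmem⟩ : ↥(F '' S)) ∈ closure s := hsd _
    rw [closure_subtype] at h1
    refine closure_mono ?_ h1
    rintro _ ⟨a, ha, rfl⟩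
    exact ⟨g a, ⟨hg1 a, fun hgp => hpD ⟨a, ha, hgp⟩⟩, hg2 a⟩
  obtain ⟨u, humem, hulim⟩ := mem_closure_iff_seq_limit.mp hFp
  choose ps hps hpsF using fun n => (Set.mem_image _ _ _).mp (humem n)
  have hpsS : ∀ n, ps n ∈ S := fun n => (hps n).1
  have hpsne : ∀ n, ps n ≠ p := fun n => (hps n).2
  have hps1 : ∀ n, ps n ∈ Set.Ioi (1 : ℝ) := fun n => (hpsS n).1
  have hpsN : ∀ n, ‖Qf (ps n)‖ ≤ (N : ℝ) := fun n => (hpsS n).2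
  have hlimF : Tendsto (fun n => F (ps n)) atTop (𝓝 (F p)) :=
    hulim.congr (fun n => (hpsF n).symm)
  have hpt : ∀ i, Tendsto (fun n => Qf (ps n) (xs i)) atTop (𝓝 (Qf p (xs i))) :=
    tendsto_pi_nhds.mp hlimF
  -- uniform boundedness upgrades dense-sequence convergence to full SOT convergence
  have dist_le : ∀ (T : X →L[𝕜] X) (a b : X), dist (T a) (T b) ≤ ‖T‖ * dist a b := by
    intro T a b
    rw [dist_eq_norm, dist_eq_norm, ← map_sub]
    exact T.le_opNorm _
  have key : ∀ x : X, Tendsto (fun n => Qf (ps n) x) atTop (𝓝 (Qf p x)) := by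
    intro x
    rw [Metric.tendsto_atTop]
    intro ε hε
    have hC : (0 : ℝ) < (N : ℝ) + ‖Qf p‖ + 1 := by positivity
    obtain ⟨i, hi⟩ := Metric.denseRange_iff.mp hxs x (ε / 3 / ((N : ℝ) + ‖Qf p‖ + 1))
      (by positivity)
    obtain ⟨n0, hn0⟩ := Metric.tendsto_atTop.mp (hpt i) (ε / 3) (by positivity)
    refine ⟨n0, fun n hn => ?_⟩
    have d1 := dist_le (Qf (ps n)) x (xs i)
    have d3 := dist_le (Qf p) (xs i) x
    rw [dist_comm (xs i) x] at d3
    have tri : dist (Qf (ps n) x) (Qf p x) ≤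
        dist (Qf (ps n) x) (Qf (ps n) (xs i)) + dist (Qf (ps n) (xs i)) (Qf p (xs i)) +
          dist (Qf p (xs i)) (Qf p x) := dist_triangle4 _ _ _ _
    have hd2 := hn0 n hn
    have hdxi : (0 : ℝ) ≤ dist x (xs i) := dist_nonneg
    have h1 : ((N : ℝ) + ‖Qf p‖) * dist x (xs i) < ε / 3 := by
      have h2 : ((N : ℝ) + ‖Qf p‖) * dist x (xs i) ≤
          ((N : ℝ) + ‖Qf p‖ + 1) * dist x (xs i) := by nlinarith
      have h3 : ((N : ℝ) + ‖Qf p‖ + 1) * dist x (xs i) <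
          ((N : ℝ) + ‖Qf p‖ + 1) * (ε / 3 / ((N : ℝ) + ‖Qf p‖ + 1)) :=
        mul_lt_mul_of_pos_left hi hC
      have h4 : ((N : ℝ) + ‖Qf p‖ + 1) * (ε / 3 / ((N : ℝ) + ‖Qf p‖ + 1)) = ε / 3 := by
        field_simp
      linarith
    nlinarith [mul_le_mul_of_nonneg_right (hpsN n) hdxi]
  -- the complemented-copy maps
  set Jq : ∀ q (hq : q ∈ Set.Ioi (1 : ℝ)), E q →L[𝕜] X :=
    fun q hq => (Z q hq).subtypeL.comp ((he q hq).some : E q →L[𝕜] Z q hq) with hJqdef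
  set Rq : ∀ q (hq : q ∈ Set.Ioi (1 : ℝ)), X →L[𝕜] E q :=
    fun q hq => (((he q hq).some.symm : Z q hq →L[𝕜] E q)).comp
      ((Qf q).codRestrict (Z q hq) (hQfmem q hq)) with hRqdef
  have hJR : ∀ q (hq : q ∈ Set.Ioi (1 : ℝ)), (Jq q hq).comp (Rq q hq) = Qf q := by
    intro q hq
    ext x
    simp [hJqdef, hRqdef]
  have hRJ : ∀ v : E p, Rq p hp1 (Jq p hp1 v) = v := by
    intro v
    have hmemJ : (((he p hp1).some v : Z p hp1) : X) ∈ Z p hp1 := Submodule.coe_mem _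
    have h1 : Qf p (((he p hp1).some v : Z p hp1) : X) = (((he p hp1).some v : Z p hp1) : X) :=
      hfix p hp1 _ hmemJ
    have h2 : ((Qf p).codRestrict (Z p hp1) (hQfmem p hp1))
        ((((he p hp1).some v : Z p hp1) : X)) = (he p hp1).some v :=
      Subtype.ext (by simpa using h1)
    simp [hJqdef, hRqdef, h2]
  -- the compact approximating operators
  set K : ℕ → (E p →L[𝕜] E p) :=
    fun n => (Rq p hp1).comp ((Qf (ps n)).comp (Jq p hp1)) with hKdef
  set M : ℝ := ‖Rq p hp1‖ * ((N : ℝ) * ‖Jq p hp1‖) with hMdef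
  have hKnorm : ∀ n, ‖K n‖ ≤ M := by
    intro n
    calc ‖K n‖ ≤ ‖Rq p hp1‖ * ‖(Qf (ps n)).comp (Jq p hp1)‖ :=
          ContinuousLinearMap.opNorm_comp_le _ _
      _ ≤ ‖Rq p hp1‖ * (‖Qf (ps n)‖ * ‖Jq p hp1‖) := by
          gcongr
          exact ContinuousLinearMap.opNorm_comp_le _ _
      _ ≤ M := by
          rw [hMdef]
          gcongr
          exact hpsN n
  have hKcpt : ∀ n, IsCompactOperator (K n) := by
    intro n
    have hfac : (⇑(K n) : E p → E p) =
        ⇑((Rq p hp1).comp (Jq (ps n) (hps1 n))) ∘ ⇑((Rq (ps n) (hps1 n)).comp (Jq p hp1)) := by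
      funext v
      have hc := ContinuousLinearMap.ext_iff.mp (hJR (ps n) (hps1 n)) ((Jq p hp1) v)
      simp only [ContinuousLinearMap.comp_apply] at hc
      simp only [hKdef, Function.comp_apply, ContinuousLinearMap.comp_apply, hc]
    rw [hfac]
    rcases lt_or_gt_of_ne (hpsne n) with hlt | hgt
    · exact (hcpt (ps n) p (hps1 n) hlt ((Rq (ps n) (hps1 n)).comp (Jq p hp1))).clm_comp _
    · exact (hcpt p (ps n) hp1 hgt ((Rq p hp1).comp (Jq (ps n) (hps1 n)))).comp_clm _
  have hKlim : ∀ v : E p, Tendsto (fun n => K n v) atTop (𝓝 v) := by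
    intro v
    have h1 : Tendsto (fun n => Qf (ps n) (Jq p hp1 v)) atTop (𝓝 (Qf p (Jq p hp1 v))) :=
      key _
    have h2 := ((Rq p hp1).continuous.tendsto _).comp h1
    have hmemJ : Jq p hp1 v ∈ Z p hp1 := by
      simp only [hJqdef, ContinuousLinearMap.comp_apply, Submodule.subtypeL_apply]
      exact Submodule.coe_mem _
    have h3 : Qf p (Jq p hp1 v) = Jq p hp1 v := hfix p hp1 _ hmemJ
    have h4 : Rq p hp1 (Qf p (Jq p hp1 v)) = v := by rw [h3]; exact hRJ v
    rw [h4] at h2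
    refine h2.congr fun n => ?_
    simp [hKdef, Function.comp_apply]
  refine hBCAP p hp1 ⟨M, ?_⟩
  show (1 : E p →L[𝕜] E p) ∈ @closure _
    (TopologicalSpace.induced (fun T : E p →L[𝕜] E p => (T : E p → E p)) Pi.topologicalSpace)
    {K : E p →L[𝕜] E p | IsCompactOperator K ∧ ‖K‖ ≤ M}
  rw [closure_induced]
  have htend : Tendsto (fun n => (⇑(K n) : E p → E p)) atTop
      (𝓝 (⇑(1 : E p →L[𝕜] E p))) := by
    rw [tendsto_pi_nhds]
    intro v
    simpa using hKlim v
  exact mem_closure_of_tendsto htend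
    (Eventually.of_forall fun n => ⟨K n, ⟨hKcpt n, hKnorm n⟩, rfl⟩)
end

section
/- Let H be a separable infinite-dimensional complex Hilbert space, let T1 and T3 be bounded operators on H, and let T2 and T4 be bounded operators on a (not necessarily separable) complex Hilbert space G. If T1 ⊕ T2 is unitarily equivalent to T3 ⊕ T4 (as operators on H ⊕ G), then there exists a separable closed subspace M of G, invariant under each of T2, T2*, T4, T4*, such that T1 ⊕ (T2|_M) is unitarily equivalent to T3 ⊕ (T4|_M). -/
open Filter Topology ContinuousLinearMap

/-- Conjugation of an operator by a unitary (linear isometric equivalence): `W T W*`. -/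
noncomputable def conjOp {H₁ H₂ : Type*} [NormedAddCommGroup H₁] [InnerProductSpace ℂ H₁]
    [NormedAddCommGroup H₂] [InnerProductSpace ℂ H₂]
    (W : H₁ ≃ₗᵢ[ℂ] H₂) (T : H₁ →L[ℂ] H₁) : H₂ →L[ℂ] H₂ :=
  ((W.toContinuousLinearEquiv : H₁ →L[ℂ] H₂).comp T).comp
    ((W.symm.toContinuousLinearEquiv : H₂ →L[ℂ] H₁))

/-- The restriction of an operator to an invariant subspace. -/
noncomputable def opRestrict {H : Type*} [NormedAddCommGroup H] [InnerProductSpace ℂ H]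
    (T : H →L[ℂ] H) (M : Submodule ℂ H) (hM : ∀ x ∈ M, T x ∈ M) : M →L[ℂ] M :=
  { toLinearMap := (T : H →ₗ[ℂ] H).restrict hM
    cont := Continuous.subtype_mk (T.continuous.comp continuous_subtype_val) _ }

/-- Two operators (possibly on different Hilbert spaces) are *compalent* if one is a compact
perturbation of a unitary conjugate of the other: `T₂ = W T₁ W* + K` with `K` compact. -/
def Compalent {H₁ H₂ : Type*} [NormedAddCommGroup H₁] [InnerProductSpace ℂ H₁]
    [NormedAddCommGroup H₂] [InnerProductSpace ℂ H₂]
    (T₁ : H₁ →L[ℂ] H₁) (T₂ : H₂ →L[ℂ] H₂) : Prop :=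
  ∃ W : H₁ ≃ₗᵢ[ℂ] H₂, IsCompactOperator (T₂ - conjOp W T₁)

/-- `S` is compalent to a reducing part of `T`, that is, to the restriction of `T` to a closed
subspace invariant under both `T` and `T*`. -/
def CompalentToReducingPart {H : Type*} [NormedAddCommGroup H] [InnerProductSpace ℂ H]
    [CompleteSpace H] (S T : H →L[ℂ] H) : Prop :=
  ∃ (M : Submodule ℂ H) (_ : IsClosed (M : Set H))
    (hT : ∀ x ∈ M, T x ∈ M) (_ : ∀ x ∈ M, ContinuousLinearMap.adjoint T x ∈ M),
    Compalent S (opRestrict T M hT)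

/-- The direct sum `T ⊕ S` of two operators, acting on the Hilbert space direct sum
`H₁ ⊕ H₂ = WithLp 2 (H₁ × H₂)`. -/
noncomputable def dSum {H₁ H₂ : Type*} [NormedAddCommGroup H₁] [InnerProductSpace ℂ H₁]
    [NormedAddCommGroup H₂] [InnerProductSpace ℂ H₂]
    (T : H₁ →L[ℂ] H₁) (S : H₂ →L[ℂ] H₂) :
    WithLp 2 (H₁ × H₂) →L[ℂ] WithLp 2 (H₁ × H₂) :=
  (((WithLp.prodContinuousLinearEquiv 2 ℂ H₁ H₂).symm : H₁ × H₂ →L[ℂ] WithLp 2 (H₁ × H₂)).comp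
    (T.prodMap S)).comp
    ((WithLp.prodContinuousLinearEquiv 2 ℂ H₁ H₂ : WithLp 2 (H₁ × H₂) →L[ℂ] H₁ × H₂))


section Aux
variable {K : Type*} [NormedAddCommGroup K] [InnerProductSpace ℂ K]

/-- Smallest closed invariant subspace containing a separable set is separable. -/
lemma exists_invariant_subspace {ι : Type*} [Countable ι] (f : ι → (K →L[ℂ] K))
    {s : Set K} (hs : TopologicalSpace.IsSeparable s) :
    ∃ N : Submodule ℂ K, IsClosed (N : Set K) ∧ TopologicalSpace.IsSeparable (N : Set K) ∧ s ⊆ N ∧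
      ∀ i, ∀ x ∈ N, f i x ∈ N := by
  set U : Set K := ⋃ w : List ι, ((w.map f).prod) '' s with hU
  have hsU : s ⊆ U := by
    intro x hx
    exact Set.mem_iUnion.2 ⟨[], ⟨x, hx, rfl⟩⟩
  have hUsep : TopologicalSpace.IsSeparable U := by
    refine TopologicalSpace.IsSeparable.iUnion fun w => hs.image ?_
    exact (ContinuousLinearMap.continuous _)
  have hUinv : ∀ i, f i '' U ⊆ U := by
    rintro i _ ⟨x, hx, rfl⟩
    obtain ⟨w, y, hy, rfl⟩ := Set.mem_iUnion.1 hx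
    refine Set.mem_iUnion.2 ⟨i :: w, y, hy, ?_⟩
    simp [List.prod_cons, ContinuousLinearMap.mul_apply]
  refine ⟨(Submodule.span ℂ U).topologicalClosure, Submodule.isClosed_topologicalClosure _,
    hUsep.span.closure, fun x hx => Submodule.le_topologicalClosure _ (Submodule.subset_span (hsU hx)),
    fun i x hx => ?_⟩
  have hspan : Submodule.map (f i : K →ₗ[ℂ] K) (Submodule.span ℂ U) ≤ Submodule.span ℂ U := by
    rw [Submodule.map_span]
    exact Submodule.span_mono (hUinv i)
  have : f i x ∈ closure ((Submodule.span ℂ U : Set K)) := by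
    refine map_mem_closure (f i).continuous hx ?_
    intro y hy
    exact hspan ⟨y, hy, rfl⟩
  exact this

end Aux


section Aux2
variable {H G : Type*} [NormedAddCommGroup H] [InnerProductSpace ℂ H]
  [NormedAddCommGroup G] [InnerProductSpace ℂ G]

/-- If `N = H ⊕ M`, the natural identification `H ⊕ₗ₂ M ≃ N` is a linear isometric equiv. -/
noncomputable def eEquiv (N : Submodule ℂ (WithLp 2 (H × G))) (M : Submodule ℂ G)
    (key : ∀ x : WithLp 2 (H × G), x ∈ N ↔ x.ofLp.2 ∈ M) :
    WithLp 2 (H × ↥M) ≃ₗᵢ[ℂ] ↥N where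
  toLinearEquiv :=
  { toFun := fun p => ⟨WithLp.toLp 2 ((p.ofLp.1, (p.ofLp.2 : G)) : H × G), (key _).2 p.ofLp.2.2⟩
    invFun := fun x => WithLp.toLp 2 (((x : WithLp 2 (H × G)).ofLp.1, ⟨(x : WithLp 2 (H × G)).ofLp.2, (key _).1 x.2⟩) :
      H × ↥M)
    map_add' := fun _ _ => rfl
    map_smul' := fun _ _ => rfl
    left_inv := fun _ => rfl
    right_inv := fun _ => rfl }
  norm_map' := fun p =>
    (WithLp.prod_norm_eq_of_L2 _).trans (WithLp.prod_norm_eq_of_L2 p).symm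

/-- Restriction of a unitary to an invariant (hence reducing) subspace. -/
noncomputable def restrIso {K : Type*} [NormedAddCommGroup K] [InnerProductSpace ℂ K]
    (W : K ≃ₗᵢ[ℂ] K) (N : Submodule ℂ K) (hN : ∀ x ∈ N, W x ∈ N)
    (hN' : ∀ x ∈ N, W.symm x ∈ N) : ↥N ≃ₗᵢ[ℂ] ↥N where
  toLinearEquiv :=
  { toFun := fun x => ⟨W x, hN x x.2⟩
    invFun := fun x => ⟨W.symm x, hN' x x.2⟩
    map_add' := fun x y => Subtype.ext (W.map_add x y)
    map_smul' := fun c x => Subtype.ext (W.map_smul c x)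
    left_inv := fun x => Subtype.ext (W.symm_apply_apply x)
    right_inv := fun x => Subtype.ext (W.apply_symm_apply x) }
  norm_map' := fun x => W.norm_map x

end Aux2

/-- **Lemma 3.2.** If `T₁ ⊕ T₂ ≅ T₃ ⊕ T₄` with `T₁, T₃` acting on a separable
space `H` and `T₂, T₄` on a possibly nonseparable Hilbert space `G`, then there is a separable
closed subspace `M` of `G` reducing both `T₂` and `T₄` with
`T₁ ⊕ (T₂|_M) ≅ T₃ ⊕ (T₄|_M)`. -/
theorem stmt12 {H : Type*} [NormedAddCommGroup H] [InnerProductSpace ℂ H] [CompleteSpace H]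
    [TopologicalSpace.SeparableSpace H] (hinf : ¬ FiniteDimensional ℂ H)
    {G : Type*} [NormedAddCommGroup G] [InnerProductSpace ℂ G] [CompleteSpace G]
    (T₁ T₃ : H →L[ℂ] H) (T₂ T₄ : G →L[ℂ] G)
    (h : ∃ W : WithLp 2 (H × G) ≃ₗᵢ[ℂ] WithLp 2 (H × G),
      dSum T₃ T₄ = conjOp W (dSum T₁ T₂)) :
    ∃ (M : Submodule ℂ G) (_ : IsClosed (M : Set G))
      (_ : TopologicalSpace.SeparableSpace M)
      (h₂ : ∀ x ∈ M, T₂ x ∈ M) (_ : ∀ x ∈ M, ContinuousLinearMap.adjoint T₂ x ∈ M)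
      (h₄ : ∀ x ∈ M, T₄ x ∈ M) (_ : ∀ x ∈ M, ContinuousLinearMap.adjoint T₄ x ∈ M),
      ∃ V : WithLp 2 (H × M) ≃ₗᵢ[ℂ] WithLp 2 (H × M),
        dSum T₃ (opRestrict T₄ M h₄) = conjOp V (dSum T₁ (opRestrict T₂ M h₂)) := by
  classical
  obtain ⟨W, hW⟩ := h
  set K := WithLp 2 (H × G) with hK
  let Jl : H →L[ℂ] K := ((WithLp.prodContinuousLinearEquiv 2 ℂ H G).symm :
      H × G →L[ℂ] K).comp (ContinuousLinearMap.inl ℂ H G)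
  let Jr : G →L[ℂ] K := ((WithLp.prodContinuousLinearEquiv 2 ℂ H G).symm :
      H × G →L[ℂ] K).comp (ContinuousLinearMap.inr ℂ H G)
  let Pg : K →L[ℂ] G := (ContinuousLinearMap.snd ℂ H G).comp
      ((WithLp.prodContinuousLinearEquiv 2 ℂ H G) : K →L[ℂ] H × G)
  let f : Fin 6 → (K →L[ℂ] K) :=
    ![dSum T₁ T₂, dSum (adjoint T₁) (adjoint T₂), dSum T₃ T₄, dSum (adjoint T₃) (adjoint T₄),
      (W.toContinuousLinearEquiv : K →L[ℂ] K), (W.symm.toContinuousLinearEquiv : K →L[ℂ] K)]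
  have hssep : TopologicalSpace.IsSeparable (Set.range Jl) :=
    TopologicalSpace.isSeparable_range Jl.continuous
  obtain ⟨N, hNcl, hNsep, hsub, hinv⟩ := exists_invariant_subspace f hssep
  let M : Submodule ℂ G := N.comap (Jr : G →ₗ[ℂ] K)
  have hJl : ∀ a : H, Jl a ∈ N := fun a => hsub ⟨a, rfl⟩
  have key : ∀ x : K, x ∈ N ↔ x.ofLp.2 ∈ M := by
    intro x
    have hxsum : x = Jl x.ofLp.1 + Jr x.ofLp.2 := by
      show x = WithLp.toLp 2 ((((x.ofLp.1, (0:G)) : H × G) + (((0:H), x.ofLp.2) : H × G) : H × G))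
      simp
      rfl
    constructor
    · intro hx
      show Jr x.ofLp.2 ∈ N
      have : Jr x.ofLp.2 = x - Jl x.ofLp.1 := by
        show WithLp.toLp 2 (((0:H), x.ofLp.2) : H × G) = WithLp.toLp 2 (((x.ofLp.1, x.ofLp.2) : H × G) - ((x.ofLp.1, (0:G)) : H × G))
        simp [Prod.ext_iff, Prod.fst_sub, Prod.snd_sub]
      rw [this]
      exact N.sub_mem hx (hJl x.ofLp.1)
    · intro hx
      rw [hxsum]
      exact N.add_mem (hJl x.ofLp.1) hx
  have hMcl : IsClosed (M : Set G) := by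
    have : (M : Set G) = Jr ⁻¹' (N : Set K) := rfl
    rw [this]
    exact hNcl.preimage Jr.continuous
  have hMsep : TopologicalSpace.IsSeparable (M : Set G) := by
    refine (hNsep.image Pg.continuous).mono ?_
    intro g hg
    exact ⟨Jr g, hg, rfl⟩
  have hMsepSpace : TopologicalSpace.SeparableSpace ↥M := hMsep.separableSpace
  -- invariance of M under the four operators
  have hMem : ∀ (i : Fin 6) (S : G →L[ℂ] G), (∀ g : G, f i (Jr g) = Jr (S g)) →
      ∀ g ∈ M, S g ∈ M := by
    intro i S hiS g hg
    show Jr (S g) ∈ N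
    rw [← hiS g]
    exact hinv i (Jr g) hg
  have h₂ : ∀ g ∈ M, T₂ g ∈ M := by
    refine hMem 0 T₂ fun g => ?_
    show WithLp.toLp 2 ((T₁ 0, T₂ g) : H × G) = WithLp.toLp 2 (((0:H), T₂ g) : H × G)
    simp
  have h₂s : ∀ g ∈ M, adjoint T₂ g ∈ M := by
    refine hMem 1 (adjoint T₂) fun g => ?_
    show WithLp.toLp 2 ((adjoint T₁ 0, adjoint T₂ g) : H × G) = WithLp.toLp 2 (((0:H), adjoint T₂ g) : H × G)
    simp
  have h₄ : ∀ g ∈ M, T₄ g ∈ M := by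
    refine hMem 2 T₄ fun g => ?_
    show WithLp.toLp 2 ((T₃ 0, T₄ g) : H × G) = WithLp.toLp 2 (((0:H), T₄ g) : H × G)
    simp
  have h₄s : ∀ g ∈ M, adjoint T₄ g ∈ M := by
    refine hMem 3 (adjoint T₄) fun g => ?_
    show WithLp.toLp 2 ((adjoint T₃ 0, adjoint T₄ g) : H × G) = WithLp.toLp 2 (((0:H), adjoint T₄ g) : H × G)
    simp
  have hWN : ∀ x ∈ N, W x ∈ N := fun x hx => hinv 4 x hx
  have hWsN : ∀ x ∈ N, W.symm x ∈ N := fun x hx => hinv 5 x hx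
  let e := eEquiv N M key
  let V₀ := restrIso W N hWN hWsN
  refine ⟨M, hMcl, hMsepSpace, h₂, h₂s, h₄, h₄s, (e.trans V₀).trans e.symm, ?_⟩
  refine ContinuousLinearMap.ext fun x => ?_
  have hW' : ∀ y : K, dSum T₃ T₄ y = W (dSum T₁ T₂ (W.symm y)) := fun y => by
    rw [hW]; rfl
  exact e.injective (Subtype.ext (hW' ((e x) : K)))
end

section
/- Let H be a separable infinite-dimensional complex Hilbert space and let T be a bounded operator on H ⊕ H such that the subspace H ⊕ {0} is invariant under T. Let B = T|_{H⊕{0}}, viewed as a bounded operator on H ⊕ {0}. Then there exists a sequence (W_n) of unitary operators from H ⊕ H onto H ⊕ {0} such that W_n T W_n* converges to B in the strong operator topology. -/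
open Filter Topology ContinuousLinearMap

open scoped ENNReal

section Auxiliary

noncomputable section

/-- The reindexing isometry between `ℓ²` spaces along an equivalence of index types. -/
def lpCongr {ι κ : Type*} (e : ι ≃ κ) :
    lp (fun _ : ι => ℂ) 2 ≃ₗᵢ[ℂ] lp (fun _ : κ => ℂ) 2 where
  toFun f := ⟨fun k => f (e.symm k),
    memℓp_gen (((lp.memℓp f).summable (by norm_num)).comp_injective e.symm.injective)⟩
  invFun g := ⟨fun i => g (e i),
    memℓp_gen (((lp.memℓp g).summable (by norm_num)).comp_injective e.injective)⟩
  map_add' f g := by ext k; rfl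
  map_smul' c f := by ext k; rfl
  left_inv f := by ext i; simp
  right_inv g := by ext k; simp
  norm_map' f := by
    have h2 : (0:ℝ) < (2:ℝ≥0∞).toReal := by norm_num
    set g : lp (fun _ : κ => ℂ) 2 := ⟨fun k => f (e.symm k),
      memℓp_gen (((lp.memℓp f).summable (by norm_num)).comp_injective e.symm.injective)⟩ with hg
    show ‖g‖ = ‖f‖
    have key : ‖g‖ ^ (2:ℝ≥0∞).toReal = ‖f‖ ^ (2:ℝ≥0∞).toReal := by
      rw [lp.norm_rpow_eq_tsum h2 g, lp.norm_rpow_eq_tsum h2 f]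
      exact Equiv.tsum_eq e.symm (fun i => ‖f i‖ ^ (2:ℝ≥0∞).toReal)
    have h22 : ((2:ℝ≥0∞).toReal) = ((2:ℕ):ℝ) := by norm_num
    rw [h22, Real.rpow_natCast, Real.rpow_natCast] at key
    calc ‖g‖ = Real.sqrt (‖g‖ ^ (2:ℕ)) := (Real.sqrt_sq (norm_nonneg _)).symm
      _ = Real.sqrt (‖f‖ ^ (2:ℕ)) := by rw [key]
      _ = ‖f‖ := Real.sqrt_sq (norm_nonneg _)

theorem lpCongr_apply {ι κ : Type*} (e : ι ≃ κ) (f : lp (fun _ : ι => ℂ) 2) (k : κ) :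
    (lpCongr e f : ∀ _ : κ, ℂ) k = f (e.symm k) := rfl

theorem lpCongr_symm_apply {ι κ : Type*} (e : ι ≃ κ) (g : lp (fun _ : κ => ℂ) 2) (i : ι) :
    ((lpCongr e).symm g : ∀ _ : ι, ℂ) i = g (e i) := rfl

theorem lpCongr_single {ι κ : Type*} [DecidableEq ι] [DecidableEq κ] (e : ι ≃ κ) (i : ι) (a : ℂ) :
    lpCongr e (lp.single 2 i a) = lp.single 2 (e i) a := by
  ext k
  rw [lpCongr_apply]
  by_cases h : k = e i
  · subst h; rw [Equiv.symm_apply_apply, lp.single_apply_self, lp.single_apply_self]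
  · rw [lp.single_apply_ne _ _ _ (fun h' => h (by rw [← h', Equiv.apply_symm_apply])),
      lp.single_apply_ne _ _ _ h]

end

/-- A bijection `ℕ ⊕ ℕ ≃ ℕ` fixing the first `n` elements of the left copy. -/
def sigmaEquiv (n : ℕ) : ℕ ⊕ ℕ ≃ ℕ where
  toFun x := match x with
    | Sum.inl k => if k < n then k else n + 2 * (k - n)
    | Sum.inr k => n + 2 * k + 1
  invFun m := if m < n then Sum.inl m
    else if (m - n) % 2 = 0 then Sum.inl (n + (m - n) / 2) else Sum.inr ((m - n) / 2)
  left_inv x := by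
    rcases x with k | k
    · by_cases h : k < n
      · simp [h]
      · have h1 : ¬ (n + 2 * (k - n) < n) := by omega
        simp only [if_neg h, if_neg h1]
        have h2 : (n + 2 * (k - n) - n) % 2 = 0 := by omega
        rw [if_pos h2]
        congr 1
        omega
    · have h1 : ¬ (n + 2 * k + 1 < n) := by omega
      simp only [if_neg h1]
      have h2 : ¬ ((n + 2 * k + 1 - n) % 2 = 0) := by omega
      rw [if_neg h2]
      congr 1
      omega
  right_inv m := by
    by_cases h : m < n
    · simp [h]
    · simp only [if_neg h]
      by_cases h2 : (m - n) % 2 = 0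
      · rw [if_pos h2]
        simp only
        rw [if_neg (by omega)]
        omega
      · rw [if_neg h2]
        simp only
        omega

theorem sigmaEquiv_inl {n k : ℕ} (h : k < n) : sigmaEquiv n (Sum.inl k) = k := by
  simp [sigmaEquiv, h]

theorem sigmaEquiv_symm_lt {n m : ℕ} (h : m < n) : (sigmaEquiv n).symm m = Sum.inl m := by
  simp [sigmaEquiv, h]

/-- An orthonormal family in a separable inner product space has countable index type. -/
theorem orthonormal_countable {H : Type*} [NormedAddCommGroup H] [InnerProductSpace ℂ H]
    [TopologicalSpace.SeparableSpace H] {ι : Type*} {v : ι → H} (hv : Orthonormal ℂ v) :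
    Countable ι := by
  apply Pairwise.countable_of_isOpen_disjoint (s := fun i => Metric.ball (v i) (1/2))
  · intro i j hij
    apply Metric.ball_disjoint_ball
    rw [dist_eq_norm]
    have h1 : ‖v i - v j‖ ^ 2 = 2 := by
      rw [norm_sub_sq (𝕜 := ℂ), hv.2 hij, hv.1 i, hv.1 j]
      norm_num
    nlinarith [norm_nonneg (v i - v j)]
  · exact fun i => Metric.isOpen_ball
  · exact fun i => ⟨v i, by simp⟩

/-- A separable infinite-dimensional Hilbert space has a Hilbert basis indexed by `ℕ`. -/
theorem exists_hilbertBasis_nat {H : Type*} [NormedAddCommGroup H] [InnerProductSpace ℂ H]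
    [CompleteSpace H] [TopologicalSpace.SeparableSpace H] (hinf : ¬ FiniteDimensional ℂ H) :
    Nonempty (HilbertBasis ℕ ℂ H) := by
  obtain ⟨w, bw, hbw⟩ := exists_hilbertBasis ℂ H
  have hcount : Countable ↥w := orthonormal_countable bw.orthonormal
  have hinfw : Infinite ↥w := by
    rw [Set.infinite_coe_iff]
    intro hfin
    apply hinf
    have : Finite ↥w := hfin.to_subtype
    have hfd : FiniteDimensional ℂ (Submodule.span ℂ w) :=
      FiniteDimensional.span_of_finite ℂ hfin
    have hclosed : IsClosed ((Submodule.span ℂ w : Submodule ℂ H) : Set H) :=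
      Submodule.closed_of_finiteDimensional _
    have hdense := bw.dense_span
    rw [hbw] at hdense
    have hrange : Set.range ((↑) : ↥w → H) = w := Subtype.range_coe
    rw [hrange] at hdense
    have htop : Submodule.span ℂ w = ⊤ := by
      rw [← hdense]
      exact (IsClosed.submodule_topologicalClosure_eq hclosed).symm
    rw [htop] at hfd
    exact hfd.of_injective (Submodule.topEquiv : (⊤ : Submodule ℂ H) ≃ₗ[ℂ] H).symm.toLinearMap
      (Submodule.topEquiv.symm.injective)
  obtain ⟨d⟩ := nonempty_denumerable ↥w
  letI := d
  exact ⟨HilbertBasis.ofRepr (bw.repr.trans (lpCongr (Denumerable.eqv ↥w)))⟩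

variable {H : Type*} [NormedAddCommGroup H] [InnerProductSpace ℂ H] [CompleteSpace H]

/-- Strong convergence to zero via a uniform bound and eventual vanishing on a Hilbert basis. -/
theorem tendsto_zero_of_eventually_basis {F : Type*} [NormedAddCommGroup F] [NormedSpace ℂ F]
    (b : HilbertBasis ℕ ℂ H) (A : ℕ → H →ₗ[ℂ] F) (C : ℝ) (hC : 0 ≤ C)
    (hbound : ∀ n x, ‖A n x‖ ≤ C * ‖x‖)
    (hev : ∀ i : ℕ, ∀ᶠ n in atTop, A n (b i) = 0) (x : H) :
    Tendsto (fun n => A n x) atTop (nhds 0) := by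
  have hspan : ∀ d ∈ Submodule.span ℂ (Set.range ⇑b),
      Tendsto (fun n => A n d) atTop (nhds 0) := by
    intro d hd
    induction hd using Submodule.span_induction with
    | mem y hy =>
      obtain ⟨i, rfl⟩ := hy
      exact Tendsto.congr' ((hev i).mono fun n hn => hn.symm) tendsto_const_nhds
    | zero => simpa using tendsto_const_nhds
    | add y z _ _ hy hz => simpa using hy.add hz
    | smul c y _ hy => simpa using hy.const_smul c
  rw [NormedAddCommGroup.tendsto_nhds_zero]
  intro ε hε
  have hx : x ∈ closure ((Submodule.span ℂ (Set.range ⇑b) : Submodule ℂ H) : Set H) := by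
    have := b.dense_span
    rw [← Submodule.topologicalClosure_coe]
    rw [this]
    simp
  obtain ⟨d, hd, hdist⟩ := Metric.mem_closure_iff.1 hx (ε / (2 * (C + 1))) (by positivity)
  have h2 : ∀ᶠ n in atTop, ‖A n d‖ < ε / 2 := by
    have := (hspan d hd).norm
    simp only [norm_zero] at this
    exact this.eventually_lt_const (by positivity) |>.mono fun n hn => hn
  filter_upwards [h2] with n hn
  have key : ‖A n x‖ ≤ ‖A n (x - d)‖ + ‖A n d‖ := by
    have : A n x = A n (x - d) + A n d := by rw [map_sub]; abel
    rw [this]; exact norm_add_le _ _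
  have hb2 : ‖A n (x - d)‖ ≤ C * ‖x - d‖ := hbound n _
  have hxd : ‖x - d‖ < ε / (2 * (C + 1)) := by rwa [← dist_eq_norm]
  have : C * ‖x - d‖ ≤ ε / 2 := by
    have h1 : C * ‖x - d‖ ≤ C * (ε / (2 * (C + 1))) :=
      mul_le_mul_of_nonneg_left hxd.le hC
    calc C * ‖x - d‖ ≤ C * (ε / (2 * (C + 1))) := h1
      _ ≤ ε / 2 := by
        have hpos : (0:ℝ) < 2 * (C + 1) := by positivity
        rw [mul_div_assoc', div_le_div_iff₀ hpos (by norm_num : (0:ℝ) < 2)]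
        nlinarith
  linarith

/-- The isometric embedding of `H` as the first factor of `H ⊕₂ H`. -/
noncomputable def iotaL : H →ₗᵢ[ℂ] WithLp 2 (H × H) where
  toLinearMap := (WithLp.linearEquiv 2 ℂ (H × H)).symm.toLinearMap ∘ₗ LinearMap.inl ℂ H H
  norm_map' x := by
    rw [norm_eq_sqrt_re_inner (𝕜 := ℂ), norm_eq_sqrt_re_inner (𝕜 := ℂ) x]
    congr 2
    simp [WithLp.prod_inner_apply]

/-- The isometric embedding of `H` as the second factor of `H ⊕₂ H`. -/
noncomputable def kappaL : H →ₗᵢ[ℂ] WithLp 2 (H × H) where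
  toLinearMap := (WithLp.linearEquiv 2 ℂ (H × H)).symm.toLinearMap ∘ₗ LinearMap.inr ℂ H H
  norm_map' x := by
    rw [norm_eq_sqrt_re_inner (𝕜 := ℂ), norm_eq_sqrt_re_inner (𝕜 := ℂ) x]
    congr 2
    simp [WithLp.prod_inner_apply]

theorem iotaL_apply (x : H) : iotaL x = (WithLp.equiv 2 (H × H)).symm (x, 0) := rfl
theorem kappaL_apply (x : H) : kappaL x = (WithLp.equiv 2 (H × H)).symm (0, x) := rfl

/-- The canonical Hilbert basis of `H ⊕₂ H` from a Hilbert basis of `H`. -/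
noncomputable def prodBasis (b : HilbertBasis ℕ ℂ H) :
    HilbertBasis (ℕ ⊕ ℕ) ℂ (WithLp 2 (H × H)) := by
  classical
  refine HilbertBasis.mk (v := Sum.elim (fun i => iotaL (b i)) (fun i => kappaL (b i))) ?_ ?_
  · rw [orthonormal_iff_ite]
    have hb := b.orthonormal
    rw [orthonormal_iff_ite] at hb
    rintro (i | i) (j | j) <;>
      simp only [Sum.elim_inl, Sum.elim_inr, iotaL_apply, kappaL_apply,
        WithLp.prod_inner_apply, WithLp.toLp_fst, WithLp.toLp_snd,
        inner_zero_left, inner_zero_right, add_zero, zero_add] <;>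
      simp [hb i j]
  · -- dense span
    set v := Sum.elim (fun i => iotaL (b i)) (fun i => kappaL (b i)) with hv
    set M := (Submodule.span ℂ (Set.range v)).topologicalClosure with hM
    intro z _
    have hMclosed : IsClosed (M : Set (WithLp 2 (H × H))) :=
      Submodule.isClosed_topologicalClosure _
    have key : ∀ (f : H →ₗᵢ[ℂ] WithLp 2 (H × H)), (∀ i, f (b i) ∈ M) → ∀ x, f x ∈ M := by
      intro f hbm x
      have hle : Submodule.span ℂ (Set.range ⇑b) ≤ Submodule.comap f.toLinearMap M :=
        Submodule.span_le.2 (by rintro _ ⟨i, rfl⟩; exact hbm i)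
      have hcl : IsClosed ((Submodule.comap f.toLinearMap M : Submodule ℂ H) : Set H) := by
        have : ((Submodule.comap f.toLinearMap M : Submodule ℂ H) : Set H)
            = ⇑f ⁻¹' (M : Set (WithLp 2 (H × H))) := rfl
        rw [this]
        exact hMclosed.preimage f.continuous
      have h2 := Submodule.topologicalClosure_minimal _ hle hcl
      rw [b.dense_span] at h2
      exact h2 Submodule.mem_top
    have hι : ∀ x : H, iotaL x ∈ M :=
      key iotaL fun i => Submodule.le_topologicalClosure _
        (Submodule.subset_span ⟨Sum.inl i, rfl⟩)
    have hκ : ∀ x : H, kappaL x ∈ M :=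
      key kappaL fun i => Submodule.le_topologicalClosure _
        (Submodule.subset_span ⟨Sum.inr i, rfl⟩)
    have hz : z = iotaL (WithLp.equiv 2 (H × H) z).1 + kappaL (WithLp.equiv 2 (H × H) z).2 := by
      apply (WithLp.equiv 2 (H × H)).injective
      ext <;> simp [iotaL_apply, kappaL_apply]
    rw [hz]
    exact M.add_mem (hι _) (hκ _)

theorem prodBasis_inl (b : HilbertBasis ℕ ℂ H) (i : ℕ) :
    prodBasis b (Sum.inl i) = iotaL (b i) := by
  rw [prodBasis, HilbertBasis.coe_mk]
  rfl

theorem prodBasis_inr (b : HilbertBasis ℕ ℂ H) (i : ℕ) :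
    prodBasis b (Sum.inr i) = kappaL (b i) := by
  rw [prodBasis, HilbertBasis.coe_mk]
  rfl

end Auxiliary

/-- **Lemma 3.9.** If `T` is an operator on `H ⊕ H` leaving `H ⊕ {0}` invariant
and `B` is its restriction to `H ⊕ {0}` (identified with `H`), then there are unitaries
`Wₙ : H ⊕ H → H ⊕ {0}` with `Wₙ T Wₙ* → B` in the strong operator topology. -/
theorem stmt18 {H : Type*} [NormedAddCommGroup H] [InnerProductSpace ℂ H] [CompleteSpace H]
    [TopologicalSpace.SeparableSpace H] (hinf : ¬ FiniteDimensional ℂ H)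
    (T : WithLp 2 (H × H) →L[ℂ] WithLp 2 (H × H)) (B : H →L[ℂ] H)
    (hB : ∀ x : H, T ((WithLp.equiv 2 (H × H)).symm (x, 0)) =
      (WithLp.equiv 2 (H × H)).symm (B x, 0)) :
    ∃ W : ℕ → (WithLp 2 (H × H) ≃ₗᵢ[ℂ] H),
      ∀ x : H, Filter.Tendsto (fun n => conjOp (W n) T x) Filter.atTop (nhds (B x)) := by
  classical
  obtain ⟨b⟩ := exists_hilbertBasis_nat hinf
  set c := prodBasis b with hc
  set W : ℕ → (WithLp 2 (H × H) ≃ₗᵢ[ℂ] H) :=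
    fun n => c.repr.trans ((lpCongr (sigmaEquiv n)).trans b.repr.symm) with hW
  refine ⟨W, ?_⟩
  have hTB : ∀ x : H, T (iotaL x) = iotaL (B x) := by
    intro x; rw [iotaL_apply, iotaL_apply]; exact hB x
  have Wapp : ∀ n z, W n z = b.repr.symm (lpCongr (sigmaEquiv n) (c.repr z)) := fun n z => rfl
  have Wsymm : ∀ n y, (W n).symm y
      = c.repr.symm ((lpCongr (sigmaEquiv n)).symm (b.repr y)) := fun n y => rfl
  have E1 : ∀ n i, i < n → W n (iotaL (b i)) = b i := by
    intro n i h
    rw [Wapp, ← prodBasis_inl b i, ← hc, HilbertBasis.repr_self, lpCongr_single,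
      sigmaEquiv_inl h, HilbertBasis.repr_symm_single]
  have E2 : ∀ n i, i < n → (W n).symm (b i) = iotaL (b i) := by
    intro n i h
    rw [Wsymm, HilbertBasis.repr_self]
    have h1 : (lpCongr (sigmaEquiv n)).symm (lp.single 2 i 1)
        = lp.single 2 (Sum.inl i) (1 : ℂ) := by
      apply (lpCongr (sigmaEquiv n)).injective
      rw [LinearIsometryEquiv.apply_symm_apply, lpCongr_single, sigmaEquiv_inl h]
    rw [h1, HilbertBasis.repr_symm_single]
    show (prodBasis b) (Sum.inl i) = iotaL (b i)
    exact prodBasis_inl b i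
  have F1 : ∀ x : H, Tendsto (fun n => W n (iotaL x)) atTop (nhds x) := by
    intro x
    rw [← tendsto_sub_nhds_zero_iff]
    have key := tendsto_zero_of_eventually_basis b
      (fun n => ((W n).toLinearEquiv.toLinearMap ∘ₗ iotaL.toLinearMap) - LinearMap.id)
      2 (by norm_num)
      (fun n y => by
        show ‖W n (iotaL y) - y‖ ≤ 2 * ‖y‖
        calc ‖W n (iotaL y) - y‖ ≤ ‖W n (iotaL y)‖ + ‖y‖ := norm_sub_le _ _
          _ ≤ 2 * ‖y‖ := by
              rw [(W n).norm_map, iotaL.norm_map]; linarith [norm_nonneg y])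
      (fun i => eventually_atTop.2 ⟨i + 1, fun n hn => by
        show W n (iotaL (b i)) - b i = 0
        rw [E1 n i (by omega), sub_self]⟩) x
    exact key
  have F2 : ∀ x : H, Tendsto (fun n => ((W n).symm x : WithLp 2 (H × H))) atTop
      (nhds (iotaL x)) := by
    intro x
    rw [← tendsto_sub_nhds_zero_iff]
    have key := tendsto_zero_of_eventually_basis b
      (fun n => (W n).symm.toLinearEquiv.toLinearMap - iotaL.toLinearMap)
      2 (by norm_num)
      (fun n y => by
        show ‖((W n).symm y : WithLp 2 (H × H)) - iotaL y‖ ≤ 2 * ‖y‖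
        calc ‖((W n).symm y : WithLp 2 (H × H)) - iotaL y‖ ≤ ‖(W n).symm y‖ + ‖iotaL y‖ := norm_sub_le _ _
          _ ≤ 2 * ‖y‖ := by
              rw [(W n).symm.norm_map, iotaL.norm_map]; linarith [norm_nonneg y])
      (fun i => eventually_atTop.2 ⟨i + 1, fun n hn => by
        show ((W n).symm (b i) : WithLp 2 (H × H)) - iotaL (b i) = 0
        rw [E2 n i (by omega), sub_self]⟩) x
    exact key
  intro x
  have conj_apply : ∀ n, conjOp (W n) T x = W n (T ((W n).symm x)) := fun n => rfl
  rw [← tendsto_sub_nhds_zero_iff]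
  have g1 : Tendsto (fun n => ‖((W n).symm x : WithLp 2 (H × H)) - iotaL x‖) atTop (nhds 0) := by
    have := tendsto_sub_nhds_zero_iff.2 (F2 x)
    simpa using this.norm
  have g2 : Tendsto (fun n => ‖W n (iotaL (B x)) - B x‖) atTop (nhds 0) := by
    have := tendsto_sub_nhds_zero_iff.2 (F1 (B x))
    simpa using this.norm
  have gtend : Tendsto (fun n => ‖T‖ * ‖((W n).symm x : WithLp 2 (H × H)) - iotaL x‖
      + ‖W n (iotaL (B x)) - B x‖) atTop (nhds 0) := by
    have := (g1.const_mul ‖T‖).add g2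
    rw [mul_zero, add_zero] at this
    exact this
  refine squeeze_zero_norm (fun n => ?_) gtend
  rw [conj_apply]
  calc ‖W n (T ((W n).symm x)) - B x‖
      ≤ ‖W n (T ((W n).symm x)) - W n (iotaL (B x))‖ + ‖W n (iotaL (B x)) - B x‖ := by
        have : W n (T ((W n).symm x)) - B x
            = (W n (T ((W n).symm x)) - W n (iotaL (B x))) + (W n (iotaL (B x)) - B x) := by abel
        rw [this]; exact norm_add_le _ _
    _ ≤ ‖T‖ * ‖((W n).symm x : WithLp 2 (H × H)) - iotaL x‖ + ‖W n (iotaL (B x)) - B x‖ := by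
        have h1 : ‖W n (T ((W n).symm x)) - W n (iotaL (B x))‖
            = ‖T ((W n).symm x) - iotaL (B x)‖ := by
          rw [← LinearIsometryEquiv.map_sub, (W n).norm_map]
        rw [h1, ← hTB x, ← map_sub]
        exact add_le_add_left (T.le_opNorm _) _
end
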